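/- For 0 < a < 1 and φ ∈ ℝ, the double series identity ∑_{n=1}^∞ (a^{2n}/(n(1−a^{2n}))) cos(nφ) = −(1/2) ∑_{m=1}^∞ log(1 − 2a^{2m} cos φ + a^{4m}) holds, with both series absolutely convergent. -/

import Mathlib

open Real

/-- Fourier series of the log kernel: for `0 ≤ s < 1`,
`∑ s^(n+1)/(n+1) cos((n+1)φ) = -(1/2) log(1 - 2 s cos φ + s²)`. -/
lemma aux_log_fourier (s φ : ℝ) (hs0 : 0 ≤ s) (hs1 : s < 1) :
    HasSum (fun n : ℕ => s ^ (n + 1) / (n + 1) * Real.cos ((n + 1) * φ))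
      (-(1 / 2) * Real.log (1 - 2 * s * Real.cos φ + s ^ 2)) := by
  set z : ℂ := (s : ℂ) * Complex.exp (φ * Complex.I) with hz_def
  have hznorm : ‖z‖ < 1 := by
    have : ‖z‖ = |s| := by
      simp [hz_def, map_mul, Complex.norm_exp_ofReal_mul_I,
        Complex.norm_real]
    rw [this, abs_of_nonneg hs0]
    exact hs1
  have h1 : HasSum (fun n : ℕ => z ^ n / n) (-Complex.log (1 - z)) :=
    Complex.hasSum_taylorSeries_neg_log hznorm
  have h2 : HasSum (fun n : ℕ => z ^ (n + 1) / (n + 1)) (-Complex.log (1 - z)) := by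
    have := (hasSum_nat_add_iff' (f := fun n : ℕ => z ^ n / n) 1).mpr h1
    simpa using this
  have h3 := h2.mapL Complex.reCLM
  have hre : ∀ n : ℕ, Complex.reCLM (z ^ (n + 1) / ((n : ℂ) + 1))
      = s ^ (n + 1) / (n + 1) * Real.cos ((n + 1) * φ) := by
    intro n
    have hzpow : z ^ (n + 1) = ((s ^ (n + 1) : ℝ) : ℂ) *
        Complex.exp (((((n : ℝ) + 1) * φ : ℝ)) * Complex.I) := by
      rw [hz_def, mul_pow, ← Complex.exp_nat_mul]
      have harg : ((n + 1 : ℕ) : ℂ) * ((φ : ℂ) * Complex.I)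
          = ((((n : ℝ) + 1) * φ : ℝ) : ℂ) * Complex.I := by push_cast; ring
      rw [harg]
      push_cast
      ring
    have e2 : ((n : ℂ) + 1) = ((((n : ℝ) + 1) : ℝ) : ℂ) := by push_cast; ring
    rw [Complex.reCLM_apply, e2, hzpow, Complex.div_ofReal_re, Complex.re_ofReal_mul,
      Complex.exp_ofReal_mul_I_re]
    ring
  have him : Complex.reCLM (-Complex.log (1 - z))
      = -(1 / 2) * Real.log (1 - 2 * s * Real.cos φ + s ^ 2) := by
    have hsq : Complex.normSq (1 - z) = 1 - 2 * s * Real.cos φ + s ^ 2 := by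
      have h1 : z.re = s * Real.cos φ := by
        simp [hz_def, Complex.re_ofReal_mul, Complex.exp_ofReal_mul_I_re]
      have h2 : z.im = s * Real.sin φ := by
        simp [hz_def, Complex.im_ofReal_mul, Complex.exp_ofReal_mul_I_im]
      have := Real.sin_sq_add_cos_sq φ
      simp only [Complex.normSq_apply, Complex.sub_re, Complex.sub_im, Complex.one_re,
        Complex.one_im, h1, h2]
      nlinarith [this]
    simp only [Complex.reCLM_apply, Complex.neg_re, Complex.log_re]
    rw [Complex.norm_def, Real.log_sqrt (Complex.normSq_nonneg _), hsq]
    ring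
  rw [funext hre] at h3
  rw [him] at h3
  exact h3

/-- Geometric series shifted by one: `∑ s^(m+1) = s/(1-s)`. -/
lemma aux_geom (s : ℝ) (hs0 : 0 ≤ s) (hs1 : s < 1) :
    HasSum (fun m : ℕ => s ^ (m + 1)) (s / (1 - s)) := by
  have h := (hasSum_geometric_of_lt_one hs0 hs1).mul_left s
  have : (fun m : ℕ => s * s ^ m) = fun m : ℕ => s ^ (m + 1) := by
    funext m; rw [pow_succ]; ring
  rw [this] at h
  rwa [div_eq_mul_inv]

set_option maxHeartbeats 1000000 in
theorem stmt_6 (a φ : ℝ) (ha0 : 0 < a) (ha1 : a < 1) :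
    (Summable fun n : ℕ =>
      |a^(2*(n+1)) / ((n+1) * (1 - a^(2*(n+1)))) * Real.cos ((n+1) * φ)|) ∧
    (Summable fun m : ℕ =>
      |Real.log (1 - 2 * a^(2*(m+1)) * Real.cos φ + a^(4*(m+1)))|) ∧
    (∑' n : ℕ, a^(2*(n+1)) / ((n+1) * (1 - a^(2*(n+1)))) * Real.cos ((n+1) * φ))
      = -(1/2) * ∑' m : ℕ, Real.log (1 - 2 * a^(2*(m+1)) * Real.cos φ + a^(4*(m+1))) := by
  set r : ℝ := a ^ 2 with hr_def
  have hr0 : 0 < r := pow_pos ha0 2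
  have hr1 : r < 1 := pow_lt_one₀ ha0.le ha1 (by norm_num)
  have hr1' : 0 < 1 - r := by linarith
  -- rewrite powers of a in terms of r
  have hpow2 : ∀ k : ℕ, a ^ (2 * (k + 1)) = r ^ (k + 1) := fun k => pow_mul a 2 (k + 1)
  have hpow4 : ∀ k : ℕ, a ^ (4 * (k + 1)) = (r ^ (k + 1)) ^ 2 := by
    intro k
    have : (r ^ (k + 1)) ^ 2 = a ^ (4 * (k + 1)) := by
      rw [hr_def, ← pow_mul, ← pow_mul]; congr 1; ring
    exact this.symm
  -- facts about s_k := r^(k+1)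
  have hs0 : ∀ k : ℕ, (0 : ℝ) ≤ r ^ (k + 1) := fun k => (pow_pos hr0 _).le
  have hs1 : ∀ k : ℕ, r ^ (k + 1) < 1 := fun k => pow_lt_one₀ hr0.le hr1 (Nat.succ_ne_zero k)
  have hs1' : ∀ k : ℕ, 1 - r ≤ 1 - r ^ (k + 1) := by
    intro k
    have : r ^ (k + 1) ≤ r := by
      calc r ^ (k + 1) ≤ r ^ 1 := pow_le_pow_of_le_one hr0.le hr1.le (by omega)
        _ = r := pow_one r
    linarith
  -- geometric summable
  have hgeo : Summable fun k : ℕ => r ^ (k + 1) := (aux_geom r hr0.le hr1).summable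
  -- Part 1
  have part1 : Summable fun n : ℕ =>
      |a^(2*(n+1)) / ((n+1) * (1 - a^(2*(n+1)))) * Real.cos ((n+1) * φ)| := by
    refine Summable.of_nonneg_of_le (fun n => abs_nonneg _) (fun n => ?_)
      (hgeo.mul_left (1 / (1 - r)))
    rw [hpow2, abs_mul, abs_div]
    have hden : |((n : ℝ) + 1) * (1 - r ^ (n + 1))| = ((n : ℝ) + 1) * (1 - r ^ (n + 1)) := by
      refine abs_of_pos (mul_pos (by positivity) (by linarith [hs1 n]))
    rw [hden, abs_of_nonneg (hs0 n)]
    have hden_ge : (1 : ℝ) * (1 - r) ≤ ((n : ℝ) + 1) * (1 - r ^ (n + 1)) := by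
      apply mul_le_mul (by norm_num [Nat.cast_nonneg]) (hs1' n) hr1'.le (by positivity)
    calc r ^ (n + 1) / (((n : ℝ) + 1) * (1 - r ^ (n + 1))) * |Real.cos ((n + 1) * φ)|
        ≤ r ^ (n + 1) / (1 * (1 - r)) * 1 := by
          apply mul_le_mul _ (abs_cos_le_one _) (abs_nonneg _) (by positivity)
          exact div_le_div_of_nonneg_left (hs0 n) (by linarith) hden_ge
      _ = 1 / (1 - r) * r ^ (n + 1) := by ring
  -- Part 2
  have part2 : Summable fun m : ℕ =>
      |Real.log (1 - 2 * a^(2*(m+1)) * Real.cos φ + a^(4*(m+1)))| := by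
    refine Summable.of_nonneg_of_le (fun m => abs_nonneg _) (fun m => ?_)
      (hgeo.mul_left (2 / (1 - r)))
    rw [hpow2, hpow4]
    set s : ℝ := r ^ (m + 1) with hs_def
    have hA := aux_log_fourier s φ (hs0 m) (hs1 m)
    have hGB := aux_geom s (hs0 m) (hs1 m)
    -- bound the tsum
    have hb : ∀ n : ℕ, |s ^ (n + 1) / (n + 1) * Real.cos ((n + 1) * φ)| ≤ s ^ (n + 1) := by
      intro n
      rw [abs_mul, abs_div]
      calc |s ^ (n + 1)| / |((n : ℝ) + 1)| * |Real.cos ((n + 1) * φ)|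
          ≤ |s ^ (n + 1)| / 1 * 1 := by
            apply mul_le_mul _ (abs_cos_le_one _) (abs_nonneg _) (by positivity)
            apply div_le_div_of_nonneg_left (abs_nonneg _) one_pos
            rw [abs_of_nonneg (by positivity : (0:ℝ) ≤ (n:ℝ)+1)]
            linarith [Nat.cast_nonneg (α := ℝ) n]
        _ = |s ^ (n + 1)| := by ring
        _ = s ^ (n + 1) := abs_of_nonneg (by positivity)
    have habs_sum : Summable fun n : ℕ =>
        |s ^ (n + 1) / (n + 1) * Real.cos ((n + 1) * φ)| :=
      Summable.of_nonneg_of_le (fun n => abs_nonneg _) hb hGB.summable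
    have htsum_bound : |∑' n : ℕ, s ^ (n + 1) / (n + 1) * Real.cos ((n + 1) * φ)|
        ≤ s / (1 - s) := by
      calc |∑' n : ℕ, s ^ (n + 1) / (n + 1) * Real.cos ((n + 1) * φ)|
          ≤ ∑' n : ℕ, |s ^ (n + 1) / (n + 1) * Real.cos ((n + 1) * φ)| := by
            have := norm_tsum_le_tsum_norm
              (f := fun n : ℕ => s ^ (n + 1) / (n + 1) * Real.cos ((n + 1) * φ))
              (by simpa only [Real.norm_eq_abs] using habs_sum)
            simpa only [Real.norm_eq_abs] using this
        _ ≤ ∑' n : ℕ, s ^ (n + 1) := Summable.tsum_le_tsum hb habs_sum hGB.summable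
        _ = s / (1 - s) := hGB.tsum_eq
    rw [hA.tsum_eq] at htsum_bound
    have hlog : |Real.log (1 - 2 * s * Real.cos φ + s ^ 2)|
        = 2 * |(-(1 / 2) : ℝ) * Real.log (1 - 2 * s * Real.cos φ + s ^ 2)| := by
      rw [abs_mul]
      rw [show |(-(1/2) : ℝ)| = 1/2 by norm_num]
      ring
    rw [hlog]
    calc 2 * |(-(1 / 2) : ℝ) * Real.log (1 - 2 * s * Real.cos φ + s ^ 2)|
        ≤ 2 * (s / (1 - s)) := by linarith [htsum_bound]
      _ ≤ 2 * (s / (1 - r)) := by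
          apply mul_le_mul_of_nonneg_left _ (by norm_num)
          exact div_le_div_of_nonneg_left (hs0 m) hr1' (hs1' m)
      _ = 2 / (1 - r) * s := by ring
  refine ⟨part1, part2, ?_⟩
  -- double series
  set F : ℕ → ℕ → ℝ := fun n m => r ^ ((n + 1) * (m + 1)) / (n + 1) * Real.cos ((n + 1) * φ)
    with hF_def
  have hFbound : ∀ p : ℕ × ℕ, |Function.uncurry F p| ≤ r ^ p.1 * r ^ p.2 := by
    rintro ⟨n, m⟩
    simp only [Function.uncurry, hF_def]
    rw [abs_mul, abs_div]
    have h1 : |r ^ ((n + 1) * (m + 1))| = r ^ ((n + 1) * (m + 1)) := abs_of_nonneg (by positivity)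
    have h2 : |((n : ℝ) + 1)| = (n : ℝ) + 1 := abs_of_nonneg (by positivity)
    rw [h1, h2]
    calc r ^ ((n + 1) * (m + 1)) / ((n : ℝ) + 1) * |Real.cos ((n + 1) * φ)|
        ≤ r ^ ((n + 1) * (m + 1)) / 1 * 1 := by
          apply mul_le_mul _ (abs_cos_le_one _) (abs_nonneg _) (by positivity)
          apply div_le_div_of_nonneg_left (by positivity) one_pos
          linarith [Nat.cast_nonneg (α := ℝ) n]
      _ = r ^ ((n + 1) * (m + 1)) := by ring
      _ ≤ r ^ (n + m) := pow_le_pow_of_le_one hr0.le hr1.le (by nlinarith)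
      _ = r ^ n * r ^ m := pow_add r n m
  have hF_summable : Summable (Function.uncurry F) := by
    apply summable_abs_iff.mp
    refine Summable.of_nonneg_of_le (fun p => abs_nonneg _) hFbound ?_
    exact (summable_geometric_of_lt_one hr0.le hr1).mul_of_nonneg
      (summable_geometric_of_lt_one hr0.le hr1)
      (fun n => pow_nonneg hr0.le n) (fun m => pow_nonneg hr0.le m)
  -- row sums
  have hrow : ∀ n : ℕ, HasSum (fun m => F n m)
      (a^(2*(n+1)) / ((n+1) * (1 - a^(2*(n+1)))) * Real.cos ((n+1) * φ)) := by
    intro n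
    rw [hpow2]
    set s : ℝ := r ^ (n + 1) with hs_def
    have hg := (aux_geom s (hs0 n) (hs1 n)).mul_left (Real.cos ((n + 1) * φ) / (n + 1))
    have heq : (fun m : ℕ => Real.cos ((n + 1) * φ) / (n + 1) * s ^ (m + 1)) = fun m => F n m := by
      funext m
      simp only [hF_def, hs_def, ← pow_mul]
      ring
    rw [heq] at hg
    convert hg using 1
    have hne1 : ((n : ℝ) + 1) ≠ 0 := by positivity
    have hne2 : (1 - s) ≠ 0 := by linarith [hs1 n]
    case e'_3 => rfl
    rw [mul_comm ((n : ℝ) + 1), ← div_div]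
    ring
  -- column sums
  have hcol : ∀ m : ℕ, HasSum (fun n => F n m)
      (-(1/2) * Real.log (1 - 2 * a^(2*(m+1)) * Real.cos φ + a^(4*(m+1)))) := by
    intro m
    rw [hpow2, hpow4]
    have hA := aux_log_fourier (r ^ (m + 1)) φ (hs0 m) (hs1 m)
    have heq : (fun n : ℕ => (r ^ (m + 1)) ^ (n + 1) / (n + 1) * Real.cos ((n + 1) * φ))
        = fun n => F n m := by
      funext n
      simp only [hF_def, ← pow_mul, mul_comm (m + 1) (n + 1)]
    rw [heq] at hA
    exact hA
  calc (∑' n : ℕ, a^(2*(n+1)) / ((n+1) * (1 - a^(2*(n+1)))) * Real.cos ((n+1) * φ))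
      = ∑' n : ℕ, ∑' m : ℕ, F n m := tsum_congr fun n => ((hrow n).tsum_eq).symm
    _ = ∑' m : ℕ, ∑' n : ℕ, F n m := (Summable.tsum_comm hF_summable).symm
    _ = ∑' m : ℕ, -(1/2) * Real.log (1 - 2 * a^(2*(m+1)) * Real.cos φ + a^(4*(m+1))) :=
        tsum_congr fun m => (hcol m).tsum_eq
    _ = -(1/2) * ∑' m : ℕ, Real.log (1 - 2 * a^(2*(m+1)) * Real.cos φ + a^(4*(m+1))) :=
        tsum_mul_left
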